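/- The absolute linear Harbourne constant for 6 lines equals −12/7: for every field K and every configuration 𝓛 of 6 mutually distinct lines in the projective plane over K, H_L(K,𝓛) ≥ −12/7, and there exists a configuration 𝓛 of 6 mutually distinct lines in the projective plane over ℂ with H_L(ℂ,𝓛) = −12/7 (namely one with t_2 = 3, t_3 = 4). -/

import Mathlib

/-- Points of the projective plane over `K`. -/
abbrev PPoint (K : Type*) [Field K] := Projectivization K (Fin 3 → K)

/-- Lines of the projective plane over `K`: points of the projectivization of the dual space. -/
abbrev PLine (K : Type*) [Field K] := Projectivization K (Module.Dual K (Fin 3 → K))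

/-- A point lies on a line iff a representative functional of the line vanishes on a
representative vector of the point. -/
def OnLine {K : Type*} [Field K] (P : PPoint K) (L : PLine K) : Prop :=
  L.rep P.rep = 0

/-- The multiplicity of a point `P` with respect to a configuration `𝓛`:
the number of lines of `𝓛` passing through `P`. -/
noncomputable def mult {K : Type*} [Field K] (𝓛 : Finset (PLine K)) (P : PPoint K) : ℕ :=
  {L : PLine K | L ∈ 𝓛 ∧ OnLine P L}.ncard

/-- The singular points of a configuration: points lying on at least two of its lines. -/
def SingPts {K : Type*} [Field K] (𝓛 : Finset (PLine K)) : Set (PPoint K) :=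
  {P | 2 ≤ mult 𝓛 P}

/-- `tk 𝓛 k` is the number of points of multiplicity exactly `k` (used for `k ≥ 2`). -/
noncomputable def tk {K : Type*} [Field K] (𝓛 : Finset (PLine K)) (k : ℕ) : ℕ :=
  {P : PPoint K | mult 𝓛 P = k}.ncard

/-- The linear Harbourne constant of a configuration `𝓛` of lines:
`(d² − Σ_P m_𝓛(P)²)/s` where the sum runs over the `s` singular points of `𝓛`. -/
noncomputable def HL {K : Type*} [Field K] (𝓛 : Finset (PLine K)) : ℚ :=
  ((𝓛.card : ℚ) ^ 2 - ∑ᶠ P ∈ SingPts 𝓛, (mult 𝓛 P : ℚ) ^ 2) / ((SingPts 𝓛).ncard : ℚ)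

section HLaux

open Module Submodule Projectivization

variable {K : Type*} [Field K]

lemma span_pair_le2 {V : Type*} [AddCommGroup V] [Module K V] (f g : V) :
    finrank K (span K {f, g} : Submodule K V) ≤ 2 := by
  classical
  have h1 : ({f, g} : Set V) = Set.range ![f, g] := by
    simp [Matrix.range_cons, Matrix.range_empty, Set.union_comm, Set.pair_comm]
  rw [h1]
  have := finrank_span_le_card (R := K) (Set.range ![f, g])
  refine this.trans ?_
  rw [Set.toFinset_range]
  exact (Finset.card_image_le).trans (by simp)

lemma pair_indep {V : Type*} [AddCommGroup V] [Module K V] {v w : V} (hv : v ≠ 0) (hw : w ≠ 0)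
    (hvw : Projectivization.mk K v hv ≠ Projectivization.mk K w hw) :
    LinearIndependent K ![v, w] := by
  rw [LinearIndependent.pair_iff]
  intro s t hst
  by_cases hs : s = 0
  · subst hs
    simp only [zero_smul, zero_add, smul_eq_zero] at hst
    exact ⟨rfl, hst.resolve_right hw⟩
  · exfalso
    have hveq : v = (-(s⁻¹ * t)) • w := by
      have h1 : s • v = -(t • w) := by linear_combination (norm := module) hst
      calc v = s⁻¹ • (s • v) := by rw [smul_smul, inv_mul_cancel₀ hs, one_smul]
        _ = s⁻¹ • (-(t • w)) := by rw [h1]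
        _ = (-(s⁻¹ * t)) • w := by rw [smul_neg, smul_smul, neg_smul]
    have hc0 : (-(s⁻¹ * t)) ≠ 0 := by
      intro h0
      apply hv
      rw [hveq, h0, zero_smul]
    apply hvw
    rw [Projectivization.mk_eq_mk_iff]
    exact ⟨Units.mk0 _ hc0, hveq.symm⟩

lemma span_pair_finrank_two {V : Type*} [AddCommGroup V] [Module K V] {v w : V}
    (h : LinearIndependent K ![v, w]) :
    finrank K (span K {v, w} : Submodule K V) = 2 := by
  have h1 : ({v, w} : Set V) = Set.range ![v, w] := by
    simp [Matrix.range_cons, Matrix.range_empty, Set.union_comm, Set.pair_comm]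
  rw [h1, finrank_span_eq_card h]
  simp

lemma exists_unique_inter (L₁ L₂ : PLine K) (h : L₁ ≠ L₂) :
    ∃! P : PPoint K, OnLine P L₁ ∧ OnLine P L₂ := by
  set f := L₁.rep with hf
  set g := L₂.rep with hg
  set W : Submodule K (Module.Dual K (Fin 3 → K)) := span K {f, g} with hW
  have hdim : finrank K W + finrank K W.dualCoannihilator = 3 := by
    have := Subspace.finrank_add_finrank_dualCoannihilator_eq W
    simpa using this
  -- existence
  have hC : 1 ≤ finrank K W.dualCoannihilator := by
    have h2 := span_pair_le2 (K := K) f g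
    rw [← hW] at h2
    omega
  have hCbot : W.dualCoannihilator ≠ ⊥ := by
    intro hb
    rw [hb] at hC
    simp at hC
  obtain ⟨v, hvC, hv⟩ : ∃ v ∈ W.dualCoannihilator, v ≠ 0 := by
    rcases Submodule.ne_bot_iff _ |>.mp hCbot with ⟨v, hv1, hv2⟩
    exact ⟨v, hv1, hv2⟩
  rw [Submodule.mem_dualCoannihilator] at hvC
  have hfv : f v = 0 := hvC f (subset_span (by simp))
  have hgv : g v = 0 := hvC g (subset_span (by simp))
  have onl : ∀ (u : Fin 3 → K) (hu : u ≠ 0) (φ : Module.Dual K (Fin 3 → K)),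
      φ u = 0 → φ (Projectivization.mk K u hu).rep = 0 := by
    intro u hu φ hφ
    obtain ⟨a, ha⟩ := (Projectivization.mk_eq_mk_iff K _ _ (Projectivization.rep_nonzero _) hu).mp
      (Projectivization.mk_rep (Projectivization.mk K u hu))
    rw [← ha]
    simp [hφ]
  refine ⟨Projectivization.mk K v hv, ⟨onl v hv f hfv, onl v hv g hgv⟩, ?_⟩
  rintro Q ⟨hQ1, hQ2⟩
  -- uniqueness: show Q = mk v
  by_contra hne
  have hv' := Projectivization.rep_nonzero (Projectivization.mk K v hv)
  have hq := Projectivization.rep_nonzero Q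
  have hmkne : Projectivization.mk K Q.rep hq ≠ Projectivization.mk K (Projectivization.mk K v hv).rep hv' := by
    rw [Projectivization.mk_rep, Projectivization.mk_rep]
    exact hne
  have hind := pair_indep hq hv' hmkne
  have hsub : span K {Q.rep, (Projectivization.mk K v hv).rep} ≤ W.dualCoannihilator := by
    rw [span_le]
    rintro x (rfl | rfl)
    · rw [SetLike.mem_coe, Submodule.mem_dualCoannihilator]
      intro φ hφ
      rw [Submodule.mem_span_pair] at hφ
      obtain ⟨a, b, rfl⟩ := hφ
      simp only [LinearMap.add_apply, LinearMap.smul_apply]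
      rw [show f Q.rep = 0 from hQ1, show g Q.rep = 0 from hQ2]
      simp
    · rw [SetLike.mem_coe, Submodule.mem_dualCoannihilator]
      intro φ hφ
      rw [Submodule.mem_span_pair] at hφ
      obtain ⟨a, b, rfl⟩ := hφ
      have h1 : f (Projectivization.mk K v hv).rep = 0 := onl v hv f hfv
      have h2 : g (Projectivization.mk K v hv).rep = 0 := onl v hv g hgv
      simp [h1, h2]
  have h2le : 2 ≤ finrank K W.dualCoannihilator := by
    have := Submodule.finrank_mono hsub
    rw [span_pair_finrank_two hind] at this
    exact this
  have hWle : finrank K W ≤ 1 := by omega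
  -- conclude f, g proportional
  have hfne : f ≠ 0 := Projectivization.rep_nonzero L₁
  have hgne : g ≠ 0 := Projectivization.rep_nonzero L₂
  have hWeq : W = span K {g} := by
    refine (Submodule.eq_of_le_of_finrank_le ?_ ?_).symm
    · rw [hW, span_le]
      rintro x rfl
      exact subset_span (by simp)
    · rw [finrank_span_singleton hgne]; exact hWle
  have hfW : f ∈ W := subset_span (by simp)
  rw [hWeq, Submodule.mem_span_singleton] at hfW
  obtain ⟨c, hc⟩ := hfW
  have hc0 : c ≠ 0 := fun h0 => hfne (by simp [h0] at hc; exact hc.symm)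
  apply h
  rw [← Projectivization.mk_rep L₁, ← Projectivization.mk_rep L₂,
    Projectivization.mk_eq_mk_iff]
  exact ⟨Units.mk0 c hc0, hc⟩

open Classical in
noncomputable def interPt (p : PLine K × PLine K) : PPoint K :=
  if h : p.1 ≠ p.2 then (exists_unique_inter p.1 p.2 h).exists.choose
  else Projectivization.mk K (fun _ => 1) (by
    intro h0; have := congrFun h0 0; simp at this)

lemma interPt_on {p : PLine K × PLine K} (h : p.1 ≠ p.2) :
    OnLine (interPt p) p.1 ∧ OnLine (interPt p) p.2 := by
  rw [interPt]
  rw [dif_pos h]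
  exact (exists_unique_inter p.1 p.2 h).exists.choose_spec

lemma interPt_eq {p : PLine K × PLine K} (h : p.1 ≠ p.2) {P : PPoint K}
    (h1 : OnLine P p.1) (h2 : OnLine P p.2) : interPt p = P := by
  obtain ⟨Q, hQ, huniq⟩ := exists_unique_inter p.1 p.2 h
  rw [huniq _ ⟨h1, h2⟩, ← huniq _ (interPt_on h)]

lemma mult_eq_filter [DecidableEq (PLine K)] (𝓛 : Finset (PLine K)) (P : PPoint K)
    [DecidablePred (OnLine P ·)] :
    mult 𝓛 P = (𝓛.filter (fun L => OnLine P L)).card := by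
  rw [mult, ← Set.ncard_coe_finset]
  congr 1
  ext L
  simp [Finset.mem_filter]

theorem part1 (𝓛 : Finset (PLine K)) (hcard : 𝓛.card = 6) : -12/7 ≤ HL 𝓛 := by
  classical
  set m : PPoint K → ℕ := fun P => mult 𝓛 P with hm
  have hmf : ∀ P, m P = (𝓛.filter (fun L => OnLine P L)).card := fun P => mult_eq_filter 𝓛 P
  set T : Finset (PPoint K) := 𝓛.offDiag.image interPt with hTdef
  -- T = SingPts
  have hT : (T : Set (PPoint K)) = SingPts 𝓛 := by
    ext P
    constructor
    · intro hPm
      rw [Finset.mem_coe, hTdef, Finset.mem_image] at hPm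
      obtain ⟨p, hp, rfl⟩ := hPm
      rw [Finset.mem_offDiag] at hp
      obtain ⟨hp1, hp2, hp3⟩ := hp
      obtain ⟨h1, h2⟩ := interPt_on hp3
      show 2 ≤ m (interPt p)
      rw [hmf]
      have hsub : {p.1, p.2} ⊆ 𝓛.filter (fun L => OnLine (interPt p) L) := by
        intro L hL
        rcases Finset.mem_insert.mp hL with rfl | hL
        · exact Finset.mem_filter.mpr ⟨hp1, h1⟩
        · rw [Finset.mem_singleton.mp hL]
          exact Finset.mem_filter.mpr ⟨hp2, h2⟩
      calc 2 = ({p.1, p.2} : Finset (PLine K)).card := by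
                rw [Finset.card_insert_of_notMem (by simpa using hp3), Finset.card_singleton]
        _ ≤ _ := Finset.card_le_card hsub
    · intro hP
      have hP2 : 2 ≤ m P := hP
      rw [hmf] at hP2
      obtain ⟨L₁, hL₁, L₂, hL₂, hne⟩ := Finset.one_lt_card.mp (by omega : 1 < (𝓛.filter (fun L => OnLine P L)).card)
      rw [Finset.mem_filter] at hL₁ hL₂
      rw [Finset.mem_coe, hTdef, Finset.mem_image]
      exact ⟨(L₁, L₂), Finset.mem_offDiag.mpr ⟨hL₁.1, hL₂.1, hne⟩, interPt_eq hne hL₁.2 hL₂.2⟩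
  -- bounds on multiplicities
  have hub : ∀ P, m P ≤ 6 := by
    intro P
    rw [hmf, ← hcard]
    exact Finset.card_filter_le _ _
  have hlb : ∀ P ∈ T, 2 ≤ m P := by
    intro P hP
    have : P ∈ (T : Set (PPoint K)) := hP
    rw [hT] at this
    exact this
  -- pair count
  have hpairs : ∑ P ∈ T, m P * (m P - 1) = 30 := by
    have hmaps : ∀ p ∈ 𝓛.offDiag, interPt p ∈ T := fun p hp => Finset.mem_image_of_mem _ hp
    have h30 : 𝓛.offDiag.card = 30 := by rw [Finset.offDiag_card, hcard]
    rw [← h30, Finset.card_eq_sum_card_fiberwise hmaps]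
    refine Finset.sum_congr rfl (fun P hP => ?_)
    have hfib : 𝓛.offDiag.filter (fun p => interPt p = P)
        = (𝓛.filter (fun L => OnLine P L)).offDiag := by
      ext p
      simp only [Finset.mem_filter, Finset.mem_offDiag]
      constructor
      · rintro ⟨⟨h1, h2, h3⟩, rfl⟩
        obtain ⟨o1, o2⟩ := interPt_on h3
        exact ⟨⟨h1, o1⟩, ⟨h2, o2⟩, h3⟩
      · rintro ⟨⟨h1, o1⟩, ⟨h2, o2⟩, h3⟩
        exact ⟨⟨h1, h2, h3⟩, interPt_eq h3 o1 o2⟩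
    rw [hfib, Finset.offDiag_card, ← hmf, Nat.mul_sub, mul_one]
  -- per-line count
  have hline : ∀ L ∈ 𝓛, ∑ P ∈ T.filter (fun P => OnLine P L), (m P - 1) = 5 := by
    intro L hL
    have hmaps : ∀ L' ∈ 𝓛.erase L, interPt (L, L') ∈ T.filter (fun P => OnLine P L) := by
      intro L' hL'
      rw [Finset.mem_erase] at hL'
      have hne : (L, L').1 ≠ (L, L').2 := fun he => hL'.1 he.symm
      refine Finset.mem_filter.mpr ⟨Finset.mem_image_of_mem _ ?_, (interPt_on hne).1⟩
      exact Finset.mem_offDiag.mpr ⟨hL, hL'.2, hne⟩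
    have h5 : (𝓛.erase L).card = 5 := by rw [Finset.card_erase_of_mem hL, hcard]
    have hfw := Finset.card_eq_sum_card_fiberwise hmaps
    rw [h5] at hfw
    rw [hfw]
    refine Finset.sum_congr rfl (fun P hP => ?_)
    rw [Finset.mem_filter] at hP
    have hfib : (𝓛.erase L).filter (fun L' => interPt (L, L') = P)
        = (𝓛.filter (fun L' => OnLine P L')).erase L := by
      ext L'
      simp only [Finset.mem_filter, Finset.mem_erase]
      constructor
      · rintro ⟨⟨h1, h2⟩, h3⟩
        have hne : ((L, L') : _ × _).1 ≠ (L, L').2 := fun he => h1 he.symm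
        obtain ⟨o1, o2⟩ := interPt_on hne
        rw [h3] at o2
        exact ⟨h1, h2, o2⟩
      · rintro ⟨h1, h2, h3⟩
        have hne : ((L, L') : _ × _).1 ≠ (L, L').2 := fun he => h1 he.symm
        exact ⟨⟨h1, h2⟩, interPt_eq hne hP.2 h3⟩
    rw [hfib, Finset.card_erase_of_mem (Finset.mem_filter.mpr ⟨hL, hP.2⟩), ← hmf]
  -- multiplicity profile counts
  set a : ℕ → ℕ := fun k => (T.filter (fun P => m P = k)).card with ha
  have hsplit : ∀ F : ℕ → ℕ, ∑ P ∈ T, F (m P) = ∑ k ∈ Finset.range 7, F k * a k := by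
    intro F
    have hmaps : ∀ P ∈ T, m P ∈ Finset.range 7 := fun P _ =>
      Finset.mem_range.mpr (by have := hub P; omega)
    rw [← Finset.sum_fiberwise_of_maps_to hmaps (fun P => F (m P))]
    refine Finset.sum_congr rfl fun k _ => ?_
    calc ∑ P ∈ T.filter (fun P => m P = k), F (m P)
        = ∑ P ∈ T.filter (fun P => m P = k), F k :=
          Finset.sum_congr rfl (fun P hP => by rw [(Finset.mem_filter.mp hP).2])
      _ = F k * a k := by rw [Finset.sum_const, smul_eq_mul, mul_comm]
  have ha0 : a 0 = 0 := Finset.card_eq_zero.mpr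
    (Finset.filter_eq_empty_iff.mpr (fun {P} hP => by have := hlb P hP; omega))
  have ha1 : a 1 = 0 := Finset.card_eq_zero.mpr
    (Finset.filter_eq_empty_iff.mpr (fun {P} hP => by have := hlb P hP; omega))
  have hcardT : T.card = a 2 + a 3 + a 4 + a 5 + a 6 := by
    have h1 := hsplit (fun _ => 1)
    simp only [Finset.sum_const, smul_eq_mul, mul_one, one_mul] at h1
    rw [h1]
    simp [Finset.sum_range_succ, ha0, ha1]
  have hpairs' : 2 * a 2 + 6 * a 3 + 12 * a 4 + 20 * a 5 + 30 * a 6 = 30 := by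
    have h1 := hsplit (fun x => x * (x - 1))
    rw [hpairs] at h1
    simp only [Finset.sum_range_succ, Finset.sum_range_zero] at h1
    norm_num at h1
    omega
  -- the key combinatorial claim
  have hclaim : ∑ P ∈ T, 7 * m P ≤ 42 + 12 * T.card := by
    by_contra hcon
    push_neg at hcon
    have h7 := hsplit (fun x => 7 * x)
    simp only [Finset.sum_range_succ, Finset.sum_range_zero] at h7
    norm_num at h7
    -- deduce the bad profile
    have hbad : a 2 = 0 ∧ a 5 = 0 ∧ a 6 = 0 ∧ a 4 ≤ 1 := by
      have k1 : 13 ≤ 3 * a 3 + 4 * a 4 + 3 * a 5 := by omega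
      have k2 : a 5 = 0 ∧ a 4 ≤ 1 := by omega
      have k3 : a 4 = 1 ∨ a 4 = 0 := by omega
      rcases k3 with h | h <;> omega
    obtain ⟨hb2, hb5, hb6, hb4⟩ := hbad
    -- find a line avoiding all points of multiplicity ≠ 3
    have hnot : ∀ k, a k = 0 → ∀ P ∈ T, m P ≠ k := by
      intro k hk P hP hPk
      have : P ∈ T.filter (fun P => m P = k) := Finset.mem_filter.mpr ⟨hP, hPk⟩
      exact Finset.card_ne_zero_of_mem this hk
    obtain ⟨L, hL, hkey⟩ : ∃ L ∈ 𝓛, ∀ P ∈ T, OnLine P L → m P = 3 := by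
      by_cases h4 : a 4 = 0
      · obtain ⟨L, hL⟩ : 𝓛.Nonempty := Finset.card_pos.mp (by omega)
        refine ⟨L, hL, fun P hP _ => ?_⟩
        have := hub P; have := hlb P hP
        have := hnot 2 hb2 P hP; have := hnot 4 h4 P hP
        have := hnot 5 hb5 P hP; have := hnot 6 hb6 P hP
        omega
      · have h41 : a 4 = 1 := by omega
        obtain ⟨P₀, hP₀⟩ := Finset.card_eq_one.mp h41
        have hm4 : m P₀ = 4 := by
          have : P₀ ∈ T.filter (fun P => m P = 4) := hP₀ ▸ Finset.mem_singleton_self P₀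
          exact (Finset.mem_filter.mp this).2
        obtain ⟨L, hL, hnotL⟩ : ∃ L ∈ 𝓛, ¬ OnLine P₀ L := by
          by_contra hco
          push_neg at hco
          have hfe : 𝓛.filter (fun L => OnLine P₀ L) = 𝓛 :=
            Finset.filter_eq_self.mpr hco
          have := hmf P₀
          rw [hfe, hcard] at this
          omega
        refine ⟨L, hL, fun P hP hPL => ?_⟩
        have := hub P; have := hlb P hP
        have := hnot 2 hb2 P hP
        have := hnot 5 hb5 P hP; have := hnot 6 hb6 P hP
        have hne4 : m P ≠ 4 := by
          intro h4'
          have : P ∈ T.filter (fun P => m P = 4) := Finset.mem_filter.mpr ⟨hP, h4'⟩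
          rw [hP₀, Finset.mem_singleton] at this
          exact hnotL (this ▸ hPL)
        omega
    -- parity contradiction on L
    have h5 := hline L hL
    have heven : ∑ P ∈ T.filter (fun P => OnLine P L), (m P - 1)
        = 2 * (T.filter (fun P => OnLine P L)).card := by
      rw [Finset.sum_congr rfl (fun P hP => ?_), Finset.sum_const, smul_eq_mul, mul_comm]
      obtain ⟨hP, hPL⟩ := Finset.mem_filter.mp hP
      rw [hkey P hP hPL]
    rw [heven] at h5
    omega
  -- assemble the inequality
  have hsq : ∑ P ∈ T, m P * m P = 30 + ∑ P ∈ T, m P := by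
    rw [← hpairs, ← Finset.sum_add_distrib]
    refine Finset.sum_congr rfl fun P hP => ?_
    have h1 := hlb P hP
    have h2 : m P ≤ m P * m P := Nat.le_mul_of_pos_left _ (by omega)
    rw [Nat.mul_sub, mul_one]
    omega
  have h7m : 7 * ∑ P ∈ T, m P ≤ 42 + 12 * T.card := by
    rw [← Finset.mul_sum] at hclaim
    exact hclaim
  have hfin : 7 * (∑ P ∈ T, m P * m P) ≤ 252 + 12 * T.card := by
    rw [hsq]
    omega
  have hTne : 1 ≤ T.card := by
    obtain ⟨L₁, hL₁, L₂, hL₂, hne⟩ := Finset.one_lt_card.mp (by omega : 1 < 𝓛.card)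
    have : interPt (L₁, L₂) ∈ T :=
      Finset.mem_image_of_mem _ (Finset.mem_offDiag.mpr ⟨hL₁, hL₂, hne⟩)
    exact Finset.card_pos.mpr ⟨_, this⟩
  -- conclude
  rw [HL, ← hT, Set.ncard_coe_finset, finsum_mem_coe_finset]
  have hQ : ∑ P ∈ T, (mult 𝓛 P : ℚ)^2 = ((∑ P ∈ T, m P * m P : ℕ) : ℚ) := by
    rw [Nat.cast_sum]
    refine Finset.sum_congr rfl fun P _ => ?_
    push_cast
    rw [pow_two]
  rw [hQ, hcard]
  have hspos : (0:ℚ) < (T.card : ℚ) := by exact_mod_cast hTne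
  rw [div_le_div_iff₀ (by norm_num) hspos]
  have hc1 : (7:ℚ) * ((∑ P ∈ T, m P * m P : ℕ) : ℚ) ≤ 252 + 12 * (T.card : ℚ) := by
    exact_mod_cast hfin
  push_cast
  push_cast at hc1
  nlinarith [hc1]


variable {K : Type*} [Field K]

lemma inter_unique {L₁ L₂ : PLine K} (h : L₁ ≠ L₂) {P Q : PPoint K}
    (h1 : OnLine P L₁) (h2 : OnLine P L₂) (h3 : OnLine Q L₁) (h4 : OnLine Q L₂) : P = Q := by
  obtain ⟨R, _, hu⟩ := exists_unique_inter L₁ L₂ h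
  rw [hu P ⟨h1, h2⟩, hu Q ⟨h3, h4⟩]

lemma onLine_mk {v : Fin 3 → K} (hv : v ≠ 0) {f : Module.Dual K (Fin 3 → K)} (hf : f ≠ 0) :
    OnLine (Projectivization.mk K v hv) (Projectivization.mk K f hf) ↔ f v = 0 := by
  obtain ⟨a, ha⟩ := (Projectivization.mk_eq_mk_iff K _ _
    (Projectivization.rep_nonzero _) hf).mp (Projectivization.mk_rep (Projectivization.mk K f hf))
  obtain ⟨b, hb⟩ := (Projectivization.mk_eq_mk_iff K _ _
    (Projectivization.rep_nonzero _) hv).mp (Projectivization.mk_rep (Projectivization.mk K v hv))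
  rw [OnLine, ← ha, ← hb]
  simp [Units.smul_def, smul_eq_zero]

lemma mk_line_ne {f g : Module.Dual K (Fin 3 → K)} (hf : f ≠ 0) (hg : g ≠ 0) (v : Fin 3 → K)
    (h1 : f v = 0) (h2 : g v ≠ 0) :
    Projectivization.mk K f hf ≠ Projectivization.mk K g hg := by
  intro h
  rw [Projectivization.mk_eq_mk_iff] at h
  obtain ⟨a, ha⟩ := h
  rw [← ha] at h1
  simp [Units.smul_def] at h1
  exact h2 h1

lemma mk_pt_ne {v w : Fin 3 → K} (hv : v ≠ 0) (hw : w ≠ 0) (i : Fin 3)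
    (h1 : v i = 0) (h2 : w i ≠ 0) :
    Projectivization.mk K v hv ≠ Projectivization.mk K w hw := by
  intro h
  rw [Projectivization.mk_eq_mk_iff] at h
  obtain ⟨a, ha⟩ := h
  rw [← ha] at h1
  simp [Units.smul_def] at h1
  exact h2 h1

noncomputable def lf (c : Fin 3 → K) : Module.Dual K (Fin 3 → K) :=
  ∑ i, c i • LinearMap.proj i

lemma lf_apply (c v : Fin 3 → K) : lf c v = c 0 * v 0 + c 1 * v 1 + c 2 * v 2 := by
  simp [lf, Fin.sum_univ_three, LinearMap.proj_apply, smul_eq_mul]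

lemma lf_ne_zero {c v : Fin 3 → K} (h : lf c v ≠ 0) : lf c ≠ 0 := fun h0 => h (by rw [h0]; rfl)

lemma vec_ne_zero {v : Fin 3 → K} (i : Fin 3) (h : v i ≠ 0) : v ≠ 0 := fun h0 => h (by rw [h0]; rfl)

noncomputable def f1 : Module.Dual ℂ (Fin 3 → ℂ) := lf ![0,0,1]
lemma hf1 : f1 ≠ 0 := lf_ne_zero (v := ![0,0,1]) (by rw [lf_apply]; norm_num [Matrix.cons_val_two])
noncomputable def L1 : PLine ℂ := Projectivization.mk ℂ f1 hf1
noncomputable def f2 : Module.Dual ℂ (Fin 3 → ℂ) := lf ![0,1,0]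
lemma hf2 : f2 ≠ 0 := lf_ne_zero (v := ![0,1,0]) (by rw [lf_apply]; norm_num [Matrix.cons_val_two])
noncomputable def L2 : PLine ℂ := Projectivization.mk ℂ f2 hf2
noncomputable def f3 : Module.Dual ℂ (Fin 3 → ℂ) := lf ![0,1,-1]
lemma hf3 : f3 ≠ 0 := lf_ne_zero (v := ![0,1,-1]) (by rw [lf_apply]; norm_num [Matrix.cons_val_two])
noncomputable def L3 : PLine ℂ := Projectivization.mk ℂ f3 hf3
noncomputable def f4 : Module.Dual ℂ (Fin 3 → ℂ) := lf ![1,0,0]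
lemma hf4 : f4 ≠ 0 := lf_ne_zero (v := ![1,0,0]) (by rw [lf_apply]; norm_num [Matrix.cons_val_two])
noncomputable def L4 : PLine ℂ := Projectivization.mk ℂ f4 hf4
noncomputable def f5 : Module.Dual ℂ (Fin 3 → ℂ) := lf ![1,0,-1]
lemma hf5 : f5 ≠ 0 := lf_ne_zero (v := ![1,0,-1]) (by rw [lf_apply]; norm_num [Matrix.cons_val_two])
noncomputable def L5 : PLine ℂ := Projectivization.mk ℂ f5 hf5
noncomputable def f6 : Module.Dual ℂ (Fin 3 → ℂ) := lf ![1,-1,0]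
lemma hf6 : f6 ≠ 0 := lf_ne_zero (v := ![1,-1,0]) (by rw [lf_apply]; norm_num [Matrix.cons_val_two])
noncomputable def L6 : PLine ℂ := Projectivization.mk ℂ f6 hf6
def vA : Fin 3 → ℂ := ![1,0,0]
lemma hvA : vA ≠ 0 := vec_ne_zero 0 (by norm_num [vA, Matrix.cons_val_two])
noncomputable def PA : PPoint ℂ := Projectivization.mk ℂ vA hvA
def vB : Fin 3 → ℂ := ![0,1,0]
lemma hvB : vB ≠ 0 := vec_ne_zero 1 (by norm_num [vB, Matrix.cons_val_two])
noncomputable def PB : PPoint ℂ := Projectivization.mk ℂ vB hvB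
def vC : Fin 3 → ℂ := ![0,0,1]
lemma hvC : vC ≠ 0 := vec_ne_zero 2 (by norm_num [vC, Matrix.cons_val_two])
noncomputable def PC : PPoint ℂ := Projectivization.mk ℂ vC hvC
def vD : Fin 3 → ℂ := ![1,1,1]
lemma hvD : vD ≠ 0 := vec_ne_zero 0 (by norm_num [vD, Matrix.cons_val_two])
noncomputable def PD : PPoint ℂ := Projectivization.mk ℂ vD hvD
def vE : Fin 3 → ℂ := ![1,1,0]
lemma hvE : vE ≠ 0 := vec_ne_zero 0 (by norm_num [vE, Matrix.cons_val_two])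
noncomputable def PE : PPoint ℂ := Projectivization.mk ℂ vE hvE
def vF : Fin 3 → ℂ := ![1,0,1]
lemma hvF : vF ≠ 0 := vec_ne_zero 0 (by norm_num [vF, Matrix.cons_val_two])
noncomputable def PF : PPoint ℂ := Projectivization.mk ℂ vF hvF
def vG : Fin 3 → ℂ := ![0,1,1]
lemma hvG : vG ≠ 0 := vec_ne_zero 1 (by norm_num [vG, Matrix.cons_val_two])
noncomputable def PG : PPoint ℂ := Projectivization.mk ℂ vG hvG
lemma on_A1 : OnLine PA L1 := (onLine_mk hvA hf1).mpr (by rw [f1, vA, lf_apply]; norm_num [Matrix.cons_val_two])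
lemma on_A2 : OnLine PA L2 := (onLine_mk hvA hf2).mpr (by rw [f2, vA, lf_apply]; norm_num [Matrix.cons_val_two])
lemma on_A3 : OnLine PA L3 := (onLine_mk hvA hf3).mpr (by rw [f3, vA, lf_apply]; norm_num [Matrix.cons_val_two])
lemma noton_A4 : ¬ OnLine PA L4 := fun h => by rw [PA, L4, onLine_mk, f4, vA, lf_apply] at h; norm_num [Matrix.cons_val_two] at h
lemma noton_A5 : ¬ OnLine PA L5 := fun h => by rw [PA, L5, onLine_mk, f5, vA, lf_apply] at h; norm_num [Matrix.cons_val_two] at h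
lemma noton_A6 : ¬ OnLine PA L6 := fun h => by rw [PA, L6, onLine_mk, f6, vA, lf_apply] at h; norm_num [Matrix.cons_val_two] at h
lemma on_B1 : OnLine PB L1 := (onLine_mk hvB hf1).mpr (by rw [f1, vB, lf_apply]; norm_num [Matrix.cons_val_two])
lemma noton_B2 : ¬ OnLine PB L2 := fun h => by rw [PB, L2, onLine_mk, f2, vB, lf_apply] at h; norm_num [Matrix.cons_val_two] at h
lemma noton_B3 : ¬ OnLine PB L3 := fun h => by rw [PB, L3, onLine_mk, f3, vB, lf_apply] at h; norm_num [Matrix.cons_val_two] at h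
lemma on_B4 : OnLine PB L4 := (onLine_mk hvB hf4).mpr (by rw [f4, vB, lf_apply]; norm_num [Matrix.cons_val_two])
lemma on_B5 : OnLine PB L5 := (onLine_mk hvB hf5).mpr (by rw [f5, vB, lf_apply]; norm_num [Matrix.cons_val_two])
lemma noton_B6 : ¬ OnLine PB L6 := fun h => by rw [PB, L6, onLine_mk, f6, vB, lf_apply] at h; norm_num [Matrix.cons_val_two] at h
lemma noton_C1 : ¬ OnLine PC L1 := fun h => by rw [PC, L1, onLine_mk, f1, vC, lf_apply] at h; norm_num [Matrix.cons_val_two] at h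
lemma on_C2 : OnLine PC L2 := (onLine_mk hvC hf2).mpr (by rw [f2, vC, lf_apply]; norm_num [Matrix.cons_val_two])
lemma noton_C3 : ¬ OnLine PC L3 := fun h => by rw [PC, L3, onLine_mk, f3, vC, lf_apply] at h; norm_num [Matrix.cons_val_two] at h
lemma on_C4 : OnLine PC L4 := (onLine_mk hvC hf4).mpr (by rw [f4, vC, lf_apply]; norm_num [Matrix.cons_val_two])
lemma noton_C5 : ¬ OnLine PC L5 := fun h => by rw [PC, L5, onLine_mk, f5, vC, lf_apply] at h; norm_num [Matrix.cons_val_two] at h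
lemma on_C6 : OnLine PC L6 := (onLine_mk hvC hf6).mpr (by rw [f6, vC, lf_apply]; norm_num [Matrix.cons_val_two])
lemma noton_D1 : ¬ OnLine PD L1 := fun h => by rw [PD, L1, onLine_mk, f1, vD, lf_apply] at h; norm_num [Matrix.cons_val_two] at h
lemma noton_D2 : ¬ OnLine PD L2 := fun h => by rw [PD, L2, onLine_mk, f2, vD, lf_apply] at h; norm_num [Matrix.cons_val_two] at h
lemma on_D3 : OnLine PD L3 := (onLine_mk hvD hf3).mpr (by rw [f3, vD, lf_apply]; norm_num [Matrix.cons_val_two])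
lemma noton_D4 : ¬ OnLine PD L4 := fun h => by rw [PD, L4, onLine_mk, f4, vD, lf_apply] at h; norm_num [Matrix.cons_val_two] at h
lemma on_D5 : OnLine PD L5 := (onLine_mk hvD hf5).mpr (by rw [f5, vD, lf_apply]; norm_num [Matrix.cons_val_two])
lemma on_D6 : OnLine PD L6 := (onLine_mk hvD hf6).mpr (by rw [f6, vD, lf_apply]; norm_num [Matrix.cons_val_two])
lemma on_E1 : OnLine PE L1 := (onLine_mk hvE hf1).mpr (by rw [f1, vE, lf_apply]; norm_num [Matrix.cons_val_two])
lemma noton_E2 : ¬ OnLine PE L2 := fun h => by rw [PE, L2, onLine_mk, f2, vE, lf_apply] at h; norm_num [Matrix.cons_val_two] at h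
lemma noton_E3 : ¬ OnLine PE L3 := fun h => by rw [PE, L3, onLine_mk, f3, vE, lf_apply] at h; norm_num [Matrix.cons_val_two] at h
lemma noton_E4 : ¬ OnLine PE L4 := fun h => by rw [PE, L4, onLine_mk, f4, vE, lf_apply] at h; norm_num [Matrix.cons_val_two] at h
lemma noton_E5 : ¬ OnLine PE L5 := fun h => by rw [PE, L5, onLine_mk, f5, vE, lf_apply] at h; norm_num [Matrix.cons_val_two] at h
lemma on_E6 : OnLine PE L6 := (onLine_mk hvE hf6).mpr (by rw [f6, vE, lf_apply]; norm_num [Matrix.cons_val_two])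
lemma noton_F1 : ¬ OnLine PF L1 := fun h => by rw [PF, L1, onLine_mk, f1, vF, lf_apply] at h; norm_num [Matrix.cons_val_two] at h
lemma on_F2 : OnLine PF L2 := (onLine_mk hvF hf2).mpr (by rw [f2, vF, lf_apply]; norm_num [Matrix.cons_val_two])
lemma noton_F3 : ¬ OnLine PF L3 := fun h => by rw [PF, L3, onLine_mk, f3, vF, lf_apply] at h; norm_num [Matrix.cons_val_two] at h
lemma noton_F4 : ¬ OnLine PF L4 := fun h => by rw [PF, L4, onLine_mk, f4, vF, lf_apply] at h; norm_num [Matrix.cons_val_two] at h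
lemma on_F5 : OnLine PF L5 := (onLine_mk hvF hf5).mpr (by rw [f5, vF, lf_apply]; norm_num [Matrix.cons_val_two])
lemma noton_F6 : ¬ OnLine PF L6 := fun h => by rw [PF, L6, onLine_mk, f6, vF, lf_apply] at h; norm_num [Matrix.cons_val_two] at h
lemma noton_G1 : ¬ OnLine PG L1 := fun h => by rw [PG, L1, onLine_mk, f1, vG, lf_apply] at h; norm_num [Matrix.cons_val_two] at h
lemma noton_G2 : ¬ OnLine PG L2 := fun h => by rw [PG, L2, onLine_mk, f2, vG, lf_apply] at h; norm_num [Matrix.cons_val_two] at h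
lemma on_G3 : OnLine PG L3 := (onLine_mk hvG hf3).mpr (by rw [f3, vG, lf_apply]; norm_num [Matrix.cons_val_two])
lemma on_G4 : OnLine PG L4 := (onLine_mk hvG hf4).mpr (by rw [f4, vG, lf_apply]; norm_num [Matrix.cons_val_two])
lemma noton_G5 : ¬ OnLine PG L5 := fun h => by rw [PG, L5, onLine_mk, f5, vG, lf_apply] at h; norm_num [Matrix.cons_val_two] at h
lemma noton_G6 : ¬ OnLine PG L6 := fun h => by rw [PG, L6, onLine_mk, f6, vG, lf_apply] at h; norm_num [Matrix.cons_val_two] at h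
lemma lne_1_2 : L1 ≠ L2 := mk_line_ne hf1 hf2 vB (by rw [f1, vB, lf_apply]; norm_num [Matrix.cons_val_two]) (by rw [f2, vB, lf_apply]; norm_num [Matrix.cons_val_two])
lemma lne_1_3 : L1 ≠ L3 := mk_line_ne hf1 hf3 vB (by rw [f1, vB, lf_apply]; norm_num [Matrix.cons_val_two]) (by rw [f3, vB, lf_apply]; norm_num [Matrix.cons_val_two])
lemma lne_1_4 : L1 ≠ L4 := mk_line_ne hf1 hf4 vA (by rw [f1, vA, lf_apply]; norm_num [Matrix.cons_val_two]) (by rw [f4, vA, lf_apply]; norm_num [Matrix.cons_val_two])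
lemma lne_1_5 : L1 ≠ L5 := mk_line_ne hf1 hf5 vA (by rw [f1, vA, lf_apply]; norm_num [Matrix.cons_val_two]) (by rw [f5, vA, lf_apply]; norm_num [Matrix.cons_val_two])
lemma lne_1_6 : L1 ≠ L6 := mk_line_ne hf1 hf6 vA (by rw [f1, vA, lf_apply]; norm_num [Matrix.cons_val_two]) (by rw [f6, vA, lf_apply]; norm_num [Matrix.cons_val_two])
lemma lne_2_3 : L2 ≠ L3 := mk_line_ne hf2 hf3 vC (by rw [f2, vC, lf_apply]; norm_num [Matrix.cons_val_two]) (by rw [f3, vC, lf_apply]; norm_num [Matrix.cons_val_two])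
lemma lne_2_4 : L2 ≠ L4 := mk_line_ne hf2 hf4 vA (by rw [f2, vA, lf_apply]; norm_num [Matrix.cons_val_two]) (by rw [f4, vA, lf_apply]; norm_num [Matrix.cons_val_two])
lemma lne_2_5 : L2 ≠ L5 := mk_line_ne hf2 hf5 vA (by rw [f2, vA, lf_apply]; norm_num [Matrix.cons_val_two]) (by rw [f5, vA, lf_apply]; norm_num [Matrix.cons_val_two])
lemma lne_2_6 : L2 ≠ L6 := mk_line_ne hf2 hf6 vA (by rw [f2, vA, lf_apply]; norm_num [Matrix.cons_val_two]) (by rw [f6, vA, lf_apply]; norm_num [Matrix.cons_val_two])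
lemma lne_3_4 : L3 ≠ L4 := mk_line_ne hf3 hf4 vA (by rw [f3, vA, lf_apply]; norm_num [Matrix.cons_val_two]) (by rw [f4, vA, lf_apply]; norm_num [Matrix.cons_val_two])
lemma lne_3_5 : L3 ≠ L5 := mk_line_ne hf3 hf5 vA (by rw [f3, vA, lf_apply]; norm_num [Matrix.cons_val_two]) (by rw [f5, vA, lf_apply]; norm_num [Matrix.cons_val_two])
lemma lne_3_6 : L3 ≠ L6 := mk_line_ne hf3 hf6 vA (by rw [f3, vA, lf_apply]; norm_num [Matrix.cons_val_two]) (by rw [f6, vA, lf_apply]; norm_num [Matrix.cons_val_two])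
lemma lne_4_5 : L4 ≠ L5 := mk_line_ne hf4 hf5 vC (by rw [f4, vC, lf_apply]; norm_num [Matrix.cons_val_two]) (by rw [f5, vC, lf_apply]; norm_num [Matrix.cons_val_two])
lemma lne_4_6 : L4 ≠ L6 := mk_line_ne hf4 hf6 vB (by rw [f4, vB, lf_apply]; norm_num [Matrix.cons_val_two]) (by rw [f6, vB, lf_apply]; norm_num [Matrix.cons_val_two])
lemma lne_5_6 : L5 ≠ L6 := mk_line_ne hf5 hf6 vB (by rw [f5, vB, lf_apply]; norm_num [Matrix.cons_val_two]) (by rw [f6, vB, lf_apply]; norm_num [Matrix.cons_val_two])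
lemma pne_A_B : PA ≠ PB := mk_pt_ne hvA hvB 1 (by norm_num [vA, Matrix.cons_val_two]) (by norm_num [vB, Matrix.cons_val_two])
lemma pne_A_C : PA ≠ PC := mk_pt_ne hvA hvC 2 (by norm_num [vA, Matrix.cons_val_two]) (by norm_num [vC, Matrix.cons_val_two])
lemma pne_A_D : PA ≠ PD := mk_pt_ne hvA hvD 1 (by norm_num [vA, Matrix.cons_val_two]) (by norm_num [vD, Matrix.cons_val_two])
lemma pne_A_E : PA ≠ PE := mk_pt_ne hvA hvE 1 (by norm_num [vA, Matrix.cons_val_two]) (by norm_num [vE, Matrix.cons_val_two])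
lemma pne_A_F : PA ≠ PF := mk_pt_ne hvA hvF 2 (by norm_num [vA, Matrix.cons_val_two]) (by norm_num [vF, Matrix.cons_val_two])
lemma pne_A_G : PA ≠ PG := mk_pt_ne hvA hvG 1 (by norm_num [vA, Matrix.cons_val_two]) (by norm_num [vG, Matrix.cons_val_two])
lemma pne_B_C : PB ≠ PC := mk_pt_ne hvB hvC 2 (by norm_num [vB, Matrix.cons_val_two]) (by norm_num [vC, Matrix.cons_val_two])
lemma pne_B_D : PB ≠ PD := mk_pt_ne hvB hvD 0 (by norm_num [vB, Matrix.cons_val_two]) (by norm_num [vD, Matrix.cons_val_two])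
lemma pne_B_E : PB ≠ PE := mk_pt_ne hvB hvE 0 (by norm_num [vB, Matrix.cons_val_two]) (by norm_num [vE, Matrix.cons_val_two])
lemma pne_B_F : PB ≠ PF := mk_pt_ne hvB hvF 0 (by norm_num [vB, Matrix.cons_val_two]) (by norm_num [vF, Matrix.cons_val_two])
lemma pne_B_G : PB ≠ PG := mk_pt_ne hvB hvG 2 (by norm_num [vB, Matrix.cons_val_two]) (by norm_num [vG, Matrix.cons_val_two])
lemma pne_C_D : PC ≠ PD := mk_pt_ne hvC hvD 0 (by norm_num [vC, Matrix.cons_val_two]) (by norm_num [vD, Matrix.cons_val_two])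
lemma pne_C_E : PC ≠ PE := mk_pt_ne hvC hvE 0 (by norm_num [vC, Matrix.cons_val_two]) (by norm_num [vE, Matrix.cons_val_two])
lemma pne_C_F : PC ≠ PF := mk_pt_ne hvC hvF 0 (by norm_num [vC, Matrix.cons_val_two]) (by norm_num [vF, Matrix.cons_val_two])
lemma pne_C_G : PC ≠ PG := mk_pt_ne hvC hvG 1 (by norm_num [vC, Matrix.cons_val_two]) (by norm_num [vG, Matrix.cons_val_two])
lemma pne_D_E : PD ≠ PE := (mk_pt_ne hvE hvD 2 (by norm_num [vE, Matrix.cons_val_two]) (by norm_num [vD, Matrix.cons_val_two])).symm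
lemma pne_D_F : PD ≠ PF := (mk_pt_ne hvF hvD 1 (by norm_num [vF, Matrix.cons_val_two]) (by norm_num [vD, Matrix.cons_val_two])).symm
lemma pne_D_G : PD ≠ PG := (mk_pt_ne hvG hvD 0 (by norm_num [vG, Matrix.cons_val_two]) (by norm_num [vD, Matrix.cons_val_two])).symm
lemma pne_E_F : PE ≠ PF := mk_pt_ne hvE hvF 2 (by norm_num [vE, Matrix.cons_val_two]) (by norm_num [vF, Matrix.cons_val_two])
lemma pne_E_G : PE ≠ PG := mk_pt_ne hvE hvG 2 (by norm_num [vE, Matrix.cons_val_two]) (by norm_num [vG, Matrix.cons_val_two])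
lemma pne_F_G : PF ≠ PG := mk_pt_ne hvF hvG 1 (by norm_num [vF, Matrix.cons_val_two]) (by norm_num [vG, Matrix.cons_val_two])
theorem part2 : ∃ 𝓛 : Finset (PLine ℂ), 𝓛.card = 6 ∧ tk 𝓛 2 = 3 ∧ tk 𝓛 3 = 4 ∧ HL 𝓛 = -12/7 := by
  classical
  set 𝓛 : Finset (PLine ℂ) := {L1, L2, L3, L4, L5, L6} with h𝓛
  have hLmem : ∀ L, L ∈ 𝓛 ↔ L = L1 ∨ L = L2 ∨ L = L3 ∨ L = L4 ∨ L = L5 ∨ L = L6 := by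
    intro L; simp [h𝓛]
  have hcard : 𝓛.card = 6 := by
    rw [h𝓛]
    rw [Finset.card_insert_of_notMem (by simp [lne_1_2, lne_1_3, lne_1_4, lne_1_5, lne_1_6, lne_2_3, lne_2_4, lne_2_5, lne_2_6, lne_3_4, lne_3_5, lne_3_6, lne_4_5, lne_4_6, lne_5_6]),
        Finset.card_insert_of_notMem (by simp [lne_1_2, lne_1_3, lne_1_4, lne_1_5, lne_1_6, lne_2_3, lne_2_4, lne_2_5, lne_2_6, lne_3_4, lne_3_5, lne_3_6, lne_4_5, lne_4_6, lne_5_6]),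
        Finset.card_insert_of_notMem (by simp [lne_1_2, lne_1_3, lne_1_4, lne_1_5, lne_1_6, lne_2_3, lne_2_4, lne_2_5, lne_2_6, lne_3_4, lne_3_5, lne_3_6, lne_4_5, lne_4_6, lne_5_6]),
        Finset.card_insert_of_notMem (by simp [lne_1_2, lne_1_3, lne_1_4, lne_1_5, lne_1_6, lne_2_3, lne_2_4, lne_2_5, lne_2_6, lne_3_4, lne_3_5, lne_3_6, lne_4_5, lne_4_6, lne_5_6]),
        Finset.card_insert_of_notMem (by simp [lne_1_2, lne_1_3, lne_1_4, lne_1_5, lne_1_6, lne_2_3, lne_2_4, lne_2_5, lne_2_6, lne_3_4, lne_3_5, lne_3_6, lne_4_5, lne_4_6, lne_5_6]), Finset.card_singleton]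
  have hmult_A : mult 𝓛 PA = 3 := by
    rw [mult_eq_filter, h𝓛]
    rw [show Finset.filter (fun L => OnLine PA L) {L1, L2, L3, L4, L5, L6} = {L1, L2, L3} by
      simp [Finset.filter_insert, Finset.filter_singleton, on_A1, on_A2, on_A3, noton_A4, noton_A5, noton_A6]]
    rw [Finset.card_insert_of_notMem (by simp [lne_1_2, lne_1_3, lne_1_4, lne_1_5, lne_1_6, lne_2_3, lne_2_4, lne_2_5, lne_2_6, lne_3_4, lne_3_5, lne_3_6, lne_4_5, lne_4_6, lne_5_6]), Finset.card_insert_of_notMem (by simp [lne_1_2, lne_1_3, lne_1_4, lne_1_5, lne_1_6, lne_2_3, lne_2_4, lne_2_5, lne_2_6, lne_3_4, lne_3_5, lne_3_6, lne_4_5, lne_4_6, lne_5_6]), Finset.card_singleton]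
  have hmult_B : mult 𝓛 PB = 3 := by
    rw [mult_eq_filter, h𝓛]
    rw [show Finset.filter (fun L => OnLine PB L) {L1, L2, L3, L4, L5, L6} = {L1, L4, L5} by
      simp [Finset.filter_insert, Finset.filter_singleton, on_B1, on_B4, on_B5, noton_B2, noton_B3, noton_B6]]
    rw [Finset.card_insert_of_notMem (by simp [lne_1_2, lne_1_3, lne_1_4, lne_1_5, lne_1_6, lne_2_3, lne_2_4, lne_2_5, lne_2_6, lne_3_4, lne_3_5, lne_3_6, lne_4_5, lne_4_6, lne_5_6]), Finset.card_insert_of_notMem (by simp [lne_1_2, lne_1_3, lne_1_4, lne_1_5, lne_1_6, lne_2_3, lne_2_4, lne_2_5, lne_2_6, lne_3_4, lne_3_5, lne_3_6, lne_4_5, lne_4_6, lne_5_6]), Finset.card_singleton]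
  have hmult_C : mult 𝓛 PC = 3 := by
    rw [mult_eq_filter, h𝓛]
    rw [show Finset.filter (fun L => OnLine PC L) {L1, L2, L3, L4, L5, L6} = {L2, L4, L6} by
      simp [Finset.filter_insert, Finset.filter_singleton, on_C2, on_C4, on_C6, noton_C1, noton_C3, noton_C5]]
    rw [Finset.card_insert_of_notMem (by simp [lne_1_2, lne_1_3, lne_1_4, lne_1_5, lne_1_6, lne_2_3, lne_2_4, lne_2_5, lne_2_6, lne_3_4, lne_3_5, lne_3_6, lne_4_5, lne_4_6, lne_5_6]), Finset.card_insert_of_notMem (by simp [lne_1_2, lne_1_3, lne_1_4, lne_1_5, lne_1_6, lne_2_3, lne_2_4, lne_2_5, lne_2_6, lne_3_4, lne_3_5, lne_3_6, lne_4_5, lne_4_6, lne_5_6]), Finset.card_singleton]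
  have hmult_D : mult 𝓛 PD = 3 := by
    rw [mult_eq_filter, h𝓛]
    rw [show Finset.filter (fun L => OnLine PD L) {L1, L2, L3, L4, L5, L6} = {L3, L5, L6} by
      simp [Finset.filter_insert, Finset.filter_singleton, on_D3, on_D5, on_D6, noton_D1, noton_D2, noton_D4]]
    rw [Finset.card_insert_of_notMem (by simp [lne_1_2, lne_1_3, lne_1_4, lne_1_5, lne_1_6, lne_2_3, lne_2_4, lne_2_5, lne_2_6, lne_3_4, lne_3_5, lne_3_6, lne_4_5, lne_4_6, lne_5_6]), Finset.card_insert_of_notMem (by simp [lne_1_2, lne_1_3, lne_1_4, lne_1_5, lne_1_6, lne_2_3, lne_2_4, lne_2_5, lne_2_6, lne_3_4, lne_3_5, lne_3_6, lne_4_5, lne_4_6, lne_5_6]), Finset.card_singleton]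
  have hmult_E : mult 𝓛 PE = 2 := by
    rw [mult_eq_filter, h𝓛]
    rw [show Finset.filter (fun L => OnLine PE L) {L1, L2, L3, L4, L5, L6} = {L1, L6} by
      simp [Finset.filter_insert, Finset.filter_singleton, on_E1, on_E6, noton_E2, noton_E3, noton_E4, noton_E5]]
    rw [Finset.card_insert_of_notMem (by simp [lne_1_2, lne_1_3, lne_1_4, lne_1_5, lne_1_6, lne_2_3, lne_2_4, lne_2_5, lne_2_6, lne_3_4, lne_3_5, lne_3_6, lne_4_5, lne_4_6, lne_5_6]), Finset.card_singleton]
  have hmult_F : mult 𝓛 PF = 2 := by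
    rw [mult_eq_filter, h𝓛]
    rw [show Finset.filter (fun L => OnLine PF L) {L1, L2, L3, L4, L5, L6} = {L2, L5} by
      simp [Finset.filter_insert, Finset.filter_singleton, on_F2, on_F5, noton_F1, noton_F3, noton_F4, noton_F6]]
    rw [Finset.card_insert_of_notMem (by simp [lne_1_2, lne_1_3, lne_1_4, lne_1_5, lne_1_6, lne_2_3, lne_2_4, lne_2_5, lne_2_6, lne_3_4, lne_3_5, lne_3_6, lne_4_5, lne_4_6, lne_5_6]), Finset.card_singleton]
  have hmult_G : mult 𝓛 PG = 2 := by
    rw [mult_eq_filter, h𝓛]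
    rw [show Finset.filter (fun L => OnLine PG L) {L1, L2, L3, L4, L5, L6} = {L3, L4} by
      simp [Finset.filter_insert, Finset.filter_singleton, on_G3, on_G4, noton_G1, noton_G2, noton_G5, noton_G6]]
    rw [Finset.card_insert_of_notMem (by simp [lne_1_2, lne_1_3, lne_1_4, lne_1_5, lne_1_6, lne_2_3, lne_2_4, lne_2_5, lne_2_6, lne_3_4, lne_3_5, lne_3_6, lne_4_5, lne_4_6, lne_5_6]), Finset.card_singleton]
  have hSing : SingPts 𝓛 = {PA, PB, PC, PD, PE, PF, PG} := by
    ext P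
    simp only [SingPts, Set.mem_setOf_eq, Set.mem_insert_iff, Set.mem_singleton_iff]
    constructor
    · intro hP
      rw [mult_eq_filter] at hP
      have h2c : 1 < (𝓛.filter (fun L => OnLine P L)).card := by omega
      obtain ⟨M₁, hM₁, M₂, hM₂, hMne⟩ := Finset.one_lt_card.mp h2c
      rw [Finset.mem_filter] at hM₁ hM₂
      obtain ⟨hm1, ho1⟩ := hM₁
      obtain ⟨hm2, ho2⟩ := hM₂
      rw [hLmem] at hm1 hm2
      rcases hm1 with rfl|rfl|rfl|rfl|rfl|rfl <;> rcases hm2 with rfl|rfl|rfl|rfl|rfl|rfl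
      · exact absurd rfl hMne
      · exact Or.inl (inter_unique hMne ho1 ho2 on_A1 on_A2)
      · exact Or.inl (inter_unique hMne ho1 ho2 on_A1 on_A3)
      · exact Or.inr (Or.inl (inter_unique hMne ho1 ho2 on_B1 on_B4))
      · exact Or.inr (Or.inl (inter_unique hMne ho1 ho2 on_B1 on_B5))
      · exact Or.inr (Or.inr (Or.inr (Or.inr (Or.inl (inter_unique hMne ho1 ho2 on_E1 on_E6)))))
      · exact Or.inl (inter_unique hMne ho1 ho2 on_A2 on_A1)
      · exact absurd rfl hMne
      · exact Or.inl (inter_unique hMne ho1 ho2 on_A2 on_A3)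
      · exact Or.inr (Or.inr (Or.inl (inter_unique hMne ho1 ho2 on_C2 on_C4)))
      · exact Or.inr (Or.inr (Or.inr (Or.inr (Or.inr (Or.inl (inter_unique hMne ho1 ho2 on_F2 on_F5))))))
      · exact Or.inr (Or.inr (Or.inl (inter_unique hMne ho1 ho2 on_C2 on_C6)))
      · exact Or.inl (inter_unique hMne ho1 ho2 on_A3 on_A1)
      · exact Or.inl (inter_unique hMne ho1 ho2 on_A3 on_A2)
      · exact absurd rfl hMne
      · exact Or.inr (Or.inr (Or.inr (Or.inr (Or.inr (Or.inr (inter_unique hMne ho1 ho2 on_G3 on_G4))))))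
      · exact Or.inr (Or.inr (Or.inr (Or.inl (inter_unique hMne ho1 ho2 on_D3 on_D5))))
      · exact Or.inr (Or.inr (Or.inr (Or.inl (inter_unique hMne ho1 ho2 on_D3 on_D6))))
      · exact Or.inr (Or.inl (inter_unique hMne ho1 ho2 on_B4 on_B1))
      · exact Or.inr (Or.inr (Or.inl (inter_unique hMne ho1 ho2 on_C4 on_C2)))
      · exact Or.inr (Or.inr (Or.inr (Or.inr (Or.inr (Or.inr (inter_unique hMne ho1 ho2 on_G4 on_G3))))))
      · exact absurd rfl hMne
      · exact Or.inr (Or.inl (inter_unique hMne ho1 ho2 on_B4 on_B5))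
      · exact Or.inr (Or.inr (Or.inl (inter_unique hMne ho1 ho2 on_C4 on_C6)))
      · exact Or.inr (Or.inl (inter_unique hMne ho1 ho2 on_B5 on_B1))
      · exact Or.inr (Or.inr (Or.inr (Or.inr (Or.inr (Or.inl (inter_unique hMne ho1 ho2 on_F5 on_F2))))))
      · exact Or.inr (Or.inr (Or.inr (Or.inl (inter_unique hMne ho1 ho2 on_D5 on_D3))))
      · exact Or.inr (Or.inl (inter_unique hMne ho1 ho2 on_B5 on_B4))
      · exact absurd rfl hMne
      · exact Or.inr (Or.inr (Or.inr (Or.inl (inter_unique hMne ho1 ho2 on_D5 on_D6))))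
      · exact Or.inr (Or.inr (Or.inr (Or.inr (Or.inl (inter_unique hMne ho1 ho2 on_E6 on_E1)))))
      · exact Or.inr (Or.inr (Or.inl (inter_unique hMne ho1 ho2 on_C6 on_C2)))
      · exact Or.inr (Or.inr (Or.inr (Or.inl (inter_unique hMne ho1 ho2 on_D6 on_D3))))
      · exact Or.inr (Or.inr (Or.inl (inter_unique hMne ho1 ho2 on_C6 on_C4)))
      · exact Or.inr (Or.inr (Or.inr (Or.inl (inter_unique hMne ho1 ho2 on_D6 on_D5))))
      · exact absurd rfl hMne
    · intro hP
      rcases hP with rfl|rfl|rfl|rfl|rfl|rfl|rfl <;> simp [hmult_A, hmult_B, hmult_C, hmult_D, hmult_E, hmult_F, hmult_G]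
  have hm2set : {P : PPoint ℂ | mult 𝓛 P = 2} = {PE, PF, PG} := by
    ext P
    simp only [Set.mem_setOf_eq, Set.mem_insert_iff, Set.mem_singleton_iff]
    constructor
    · intro h
      have h2 : P ∈ SingPts 𝓛 := by rw [SingPts]; simp [Set.mem_setOf_eq, h]
      rw [hSing] at h2
      simp only [Set.mem_insert_iff, Set.mem_singleton_iff] at h2
      rcases h2 with rfl|rfl|rfl|rfl|rfl|rfl|rfl
      · rw [hmult_A] at h; norm_num at h
      · rw [hmult_B] at h; norm_num at h
      · rw [hmult_C] at h; norm_num at h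
      · rw [hmult_D] at h; norm_num at h
      · exact Or.inl rfl
      · exact Or.inr (Or.inl rfl)
      · exact Or.inr (Or.inr (rfl))
    · intro h
      rcases h with rfl|rfl|rfl
      · exact hmult_E
      · exact hmult_F
      · exact hmult_G
  have hm3set : {P : PPoint ℂ | mult 𝓛 P = 3} = {PA, PB, PC, PD} := by
    ext P
    simp only [Set.mem_setOf_eq, Set.mem_insert_iff, Set.mem_singleton_iff]
    constructor
    · intro h
      have h2 : P ∈ SingPts 𝓛 := by rw [SingPts]; simp [Set.mem_setOf_eq, h]
      rw [hSing] at h2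
      simp only [Set.mem_insert_iff, Set.mem_singleton_iff] at h2
      rcases h2 with rfl|rfl|rfl|rfl|rfl|rfl|rfl
      · exact Or.inl rfl
      · exact Or.inr (Or.inl rfl)
      · exact Or.inr (Or.inr (Or.inl rfl))
      · exact Or.inr (Or.inr (Or.inr (rfl)))
      · rw [hmult_E] at h; norm_num at h
      · rw [hmult_F] at h; norm_num at h
      · rw [hmult_G] at h; norm_num at h
    · intro h
      rcases h with rfl|rfl|rfl|rfl
      · exact hmult_A
      · exact hmult_B
      · exact hmult_C
      · exact hmult_D
  refine ⟨𝓛, hcard, ?_, ?_, ?_⟩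
  · rw [tk, hm2set, show ({PE, PF, PG} : Set (PPoint ℂ)) = (↑({PE, PF, PG} : Finset (PPoint ℂ))) by simp, Set.ncard_coe_finset]
    rw [Finset.card_insert_of_notMem (by simp [pne_A_B, pne_A_C, pne_A_D, pne_A_E, pne_A_F, pne_A_G, pne_B_C, pne_B_D, pne_B_E, pne_B_F, pne_B_G, pne_C_D, pne_C_E, pne_C_F, pne_C_G, pne_D_E, pne_D_F, pne_D_G, pne_E_F, pne_E_G, pne_F_G]), Finset.card_insert_of_notMem (by simp [pne_A_B, pne_A_C, pne_A_D, pne_A_E, pne_A_F, pne_A_G, pne_B_C, pne_B_D, pne_B_E, pne_B_F, pne_B_G, pne_C_D, pne_C_E, pne_C_F, pne_C_G, pne_D_E, pne_D_F, pne_D_G, pne_E_F, pne_E_G, pne_F_G]), Finset.card_singleton]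
  · rw [tk, hm3set, show ({PA, PB, PC, PD} : Set (PPoint ℂ)) = (↑({PA, PB, PC, PD} : Finset (PPoint ℂ))) by simp, Set.ncard_coe_finset]
    rw [Finset.card_insert_of_notMem (by simp [pne_A_B, pne_A_C, pne_A_D, pne_A_E, pne_A_F, pne_A_G, pne_B_C, pne_B_D, pne_B_E, pne_B_F, pne_B_G, pne_C_D, pne_C_E, pne_C_F, pne_C_G, pne_D_E, pne_D_F, pne_D_G, pne_E_F, pne_E_G, pne_F_G]), Finset.card_insert_of_notMem (by simp [pne_A_B, pne_A_C, pne_A_D, pne_A_E, pne_A_F, pne_A_G, pne_B_C, pne_B_D, pne_B_E, pne_B_F, pne_B_G, pne_C_D, pne_C_E, pne_C_F, pne_C_G, pne_D_E, pne_D_F, pne_D_G, pne_E_F, pne_E_G, pne_F_G]), Finset.card_insert_of_notMem (by simp [pne_A_B, pne_A_C, pne_A_D, pne_A_E, pne_A_F, pne_A_G, pne_B_C, pne_B_D, pne_B_E, pne_B_F, pne_B_G, pne_C_D, pne_C_E, pne_C_F, pne_C_G, pne_D_E, pne_D_F, pne_D_G, pne_E_F, pne_E_G, pne_F_G]), Fi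nset.card_singleton]
  · have hT7 : SingPts 𝓛 = (↑({PA, PB, PC, PD, PE, PF, PG} : Finset (PPoint ℂ)) : Set (PPoint ℂ)) := by rw [hSing]; simp
    rw [HL, hT7, Set.ncard_coe_finset, finsum_mem_coe_finset, hcard]
    rw [Finset.sum_insert (by simp [pne_A_B, pne_A_C, pne_A_D, pne_A_E, pne_A_F, pne_A_G, pne_B_C, pne_B_D, pne_B_E, pne_B_F, pne_B_G, pne_C_D, pne_C_E, pne_C_F, pne_C_G, pne_D_E, pne_D_F, pne_D_G, pne_E_F, pne_E_G, pne_F_G]), Finset.sum_insert (by simp [pne_A_B, pne_A_C, pne_A_D, pne_A_E, pne_A_F, pne_A_G, pne_B_C, pne_B_D, pne_B_E, pne_B_F, pne_B_G, pne_C_D, pne_C_E, pne_C_F, pne_C_G, pne_D_E, pne_D_F, pne_D_G, pne_E_F, pne_E_G, pne_F_G]), Finset.sum_insert (by simp [pne_A_B, pne_A_C, pne_A_D, pne_A_E, pne_A_F, pne_A_G, pne_B_C, pne_B_D, pne_B_E, pne_B_F, pne_B_G, pne_C_D, pne_C_E, pne_C_F, pne_C_G, pne_D_E, pne_D_F, pne_D_G,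 pne_E_F, pne_E_G, pne_F_G]), Finset.sum_insert (by simp [pne_A_B, pne_A_C, pne_A_D, pne_A_E, pne_A_F, pne_A_G, pne_B_C, pne_B_D, pne_B_E, pne_B_F, pne_B_G, pne_C_D, pne_C_E, pne_C_F, pne_C_G, pne_D_E, pne_D_F, pne_D_G, pne_E_F, pne_E_G, pne_F_G]), Finset.sum_insert (by simp [pne_A_B, pne_A_C, pne_A_D, pne_A_E, pne_A_F, pne_A_G, pne_B_C, pne_B_D, pne_B_E, pne_B_F, pne_B_G, pne_C_D, pne_C_E, pne_C_F, pne_C_G, pne_D_E, pne_D_F, pne_D_G, pne_E_F, pne_E_G, pne_F_G]), Finset.sum_insert (by simp [pne_A_B, pne_A_C, pne_A_D, pne_A_E, pne_A_F, pne_A_G, pne_B_C, pne_B_D, pne_B_E, pne_B_F, pne_B_G, pne_C_D, pne_C_E, pne_C_F, pne_C_G, pne_D_E, pne_D_F, pne_D_G, pne_E_F, pne_E_G, pne_F_G]), Finset.sum_singleton]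
    rw [Finset.card_insert_of_notMem (by simp [pne_A_B, pne_A_C, pne_A_D, pne_A_E, pne_A_F, pne_A_G, pne_B_C, pne_B_D, pne_B_E, pne_B_F, pne_B_G, pne_C_D, pne_C_E, pne_C_F, pne_C_G, pne_D_E, pne_D_F, pne_D_G, pne_E_F, pne_E_G, pne_F_G]), Finset.card_insert_of_notMem (by simp [pne_A_B, pne_A_C, pne_A_D, pne_A_E, pne_A_F, pne_A_G, pne_B_C, pne_B_D, pne_B_E, pne_B_F, pne_B_G, pne_C_D, pne_C_E, pne_C_F, pne_C_G, pne_D_E, pne_D_F, pne_D_G, pne_E_F, pne_E_G, pne_F_G]), Finset.card_insert_of_notMem (by simp [pne_A_B, pne_A_C, pne_A_D, pne_A_E, pne_A_F, pne_A_G, pne_B_C, pne_B_D, pne_B_E, pne_B_F, pne_B_G, pne_C_D, pne_C_E, pne_C_F, pne_C_G, pne_D_E, pne_D_F, pne_D_G, pne_E_F, pne_E_G, pne_F_G]), Finset.card_insert_of_notMem (by simp [pne_A_B, pne_A_C, pne_A_D, pne_A_E, pne_A_F, pne_A_G, pne_B_C, pne_B_D, pne_B_E, pne_B_F, pne_B_G,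 pne_C_D, pne_C_E, pne_C_F, pne_C_G, pne_D_E, pne_D_F, pne_D_G, pne_E_F, pne_E_G, pne_F_G]), Finset.card_insert_of_notMem (by simp [pne_A_B, pne_A_C, pne_A_D, pne_A_E, pne_A_F, pne_A_G, pne_B_C, pne_B_D, pne_B_E, pne_B_F, pne_B_G, pne_C_D, pne_C_E, pne_C_F, pne_C_G, pne_D_E, pne_D_F, pne_D_G, pne_E_F, pne_E_G, pne_F_G]), Finset.card_insert_of_notMem (by simp [pne_A_B, pne_A_C, pne_A_D, pne_A_E, pne_A_F, pne_A_G, pne_B_C, pne_B_D, pne_B_E, pne_B_F, pne_B_G, pne_C_D, pne_C_E, pne_C_F, pne_C_G, pne_D_E, pne_D_F, pne_D_G, pne_E_F, pne_E_G, pne_F_G]), Finset.card_singleton]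
    rw [hmult_A, hmult_B, hmult_C, hmult_D, hmult_E, hmult_F, hmult_G]
    norm_num


end HLaux

/-- The absolute linear Harbourne constant for `6` lines equals `−12/7`, attained over `ℂ`
by a configuration with `t₂ = 3`, `t₃ = 4`. -/
theorem HL_six_lines :
    (∀ (K : Type*) [Field K] (𝓛 : Finset (PLine K)), 𝓛.card = 6 → -12/7 ≤ HL 𝓛) ∧
    (∃ 𝓛 : Finset (PLine ℂ), 𝓛.card = 6 ∧ tk 𝓛 2 = 3 ∧ tk 𝓛 3 = 4 ∧ HL 𝓛 = -12/7) := by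
  exact ⟨fun K _ 𝓛 h => part1 𝓛 h, part2⟩
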